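/- Well-definedness of the weight function ω^(b): Let k ≥ 1 and let 𝔪, 𝔫 ∈ 𝒫_k. Suppose (i j)·𝔪 = 𝔫 and (i′ j′)·𝔪 = 𝔫 for transpositions (i j) and (i′ j′) in S_{2k}, and let q be the charge function of Γ(𝔪). Then q(i) = q(j) if and only if q(i′) = q(j′). Consequently the value ω^(b)(𝔪,𝔫) ∈ {1, b} does not depend on the choice of transposition sending 𝔪 to 𝔫. -/

import Mathlib

open scoped Classical
open MeasureTheory



/-- A pair partition of `{1, …, 2k}`, encoded as an involution of `ℕ` that
moves exactly the points `1, …, 2k`.  The pairs are the two-element sets `{a, f a}`. -/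
structure PairPartition (k : ℕ) where
  f : ℕ → ℕ
  invol : ∀ a, f (f a) = a
  moves : ∀ a, f a ≠ a ↔ (1 ≤ a ∧ a ≤ 2 * k)

namespace PairPartition

/-- The function underlying the identity (trivial) pair partition
`(1 2 | 3 4 | ⋯ | 2k-1 2k)`. -/
def trivFun (k : ℕ) (a : ℕ) : ℕ :=
  if 1 ≤ a ∧ a ≤ 2 * k then (if a % 2 = 1 then a + 1 else a - 1) else a

/-- The identity pair partition `𝔢_k = (1 2 | 3 4 | ⋯ | 2k-1 2k)`. -/
def triv (k : ℕ) : PairPartition k where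
  f := trivFun k
  invol := by intro a; unfold trivFun; split_ifs <;> omega
  moves := by intro a; unfold trivFun; split_ifs <;> omega

theorem ext' {k : ℕ} {m m' : PairPartition k} (h : m.f = m'.f) : m = m' := by
  cases m; cases m'; simpa using h

/-- The action of the transposition `(i j) ∈ S_{2k}` on pair partitions of `{1, …, 2k}`
(defined to do nothing if `i` or `j` lies outside `{1, …, 2k}`). -/
def swapAct {k : ℕ} (i j : ℕ) (m : PairPartition k) : PairPartition k :=
  if h : 1 ≤ i ∧ i ≤ 2 * k ∧ 1 ≤ j ∧ j ≤ 2 * k then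
    { f := fun a => Equiv.swap i j (m.f (Equiv.swap i j a))
      invol := by intro a; simp [m.invol]
      moves := by
        obtain ⟨hi1, hi2, hj1, hj2⟩ := h
        intro a
        have key : ∀ x y : ℕ, Equiv.swap i j x ≠ y ↔ x ≠ Equiv.swap i j y := by
          intro x y
          constructor
          · intro hxy hc; apply hxy; rw [hc]; simp
          · intro hxy hc; apply hxy; rw [← hc]; simp
        rw [key, ← Equiv.swap_apply_self i j a, Equiv.swap_apply_self i j a]
        rw [m.moves (Equiv.swap i j a)]
        rcases eq_or_ne a i with rfl | hai
        · rw [Equiv.swap_apply_left]; omega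
        rcases eq_or_ne a j with rfl | haj
        · rw [Equiv.swap_apply_right]; omega
        · rw [Equiv.swap_apply_of_ne_of_ne hai haj] }
  else m

/-- Removing the pair `{2k-1, 2k}` from a pair partition: the operation `𝔪 ↦ 𝔪↓`
(defined to return the trivial pair partition if `{2k-1, 2k} ∉ 𝔪`). -/
def down {k : ℕ} (m : PairPartition k) : PairPartition (k - 1) :=
  if h : m.f (2 * k - 1) = 2 * k then
    { f := fun a => if a = 2 * k - 1 ∨ a = 2 * k then a else m.f a
      invol := by
        intro a
        by_cases ha : a = 2 * k - 1 ∨ a = 2 * k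
        · simp [ha]
        · have h2k : m.f (2 * k) = 2 * k - 1 := by
            conv_lhs => rw [← h]
            exact m.invol _
          have hne1 : m.f a ≠ 2 * k - 1 := by
            intro hfa
            have h1 : m.f (m.f a) = m.f (2 * k - 1) := by rw [hfa]
            rw [m.invol, h] at h1
            exact ha (Or.inr h1)
          have hne2 : m.f a ≠ 2 * k := by
            intro hfa
            have h1 : m.f (m.f a) = m.f (2 * k) := by rw [hfa]
            rw [m.invol, h2k] at h1
            exact ha (Or.inl h1)
          simp only [if_neg ha, if_neg (not_or.mpr ⟨hne1, hne2⟩), m.invol]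
      moves := by
        intro a
        by_cases ha : a = 2 * k - 1 ∨ a = 2 * k
        · simp only [if_pos ha]
          rcases ha with ha | ha <;> subst ha <;> constructor <;> intro h' <;> first
            | exact absurd rfl h'
            | omega
        · push_neg at ha
          obtain ⟨ha1, ha2⟩ := ha
          simp only [if_neg (not_or.mpr ⟨ha1, ha2⟩)]
          rw [m.moves a]
          omega }
  else triv (k - 1)

/-- A pair partition as a permutation (involution) of `ℕ`. -/
def perm {k : ℕ} (m : PairPartition k) : Equiv.Perm ℕ :=
  Function.Involutive.toPerm m.f m.invol

end PairPartition

namespace PairPartition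

/-- The connected component (cycle) of the multigraph `Γ(𝔪)` containing a vertex `v`:
the orbit of `v` under the group generated by the involutions `𝔢_k` and `𝔪`. -/
def gammaOrbit {k : ℕ} (m : PairPartition k) (v : ℕ) : Set ℕ :=
  MulAction.orbit (Subgroup.closure {(triv k).perm, m.perm} : Subgroup (Equiv.Perm ℕ)) v

/-- The charge function of `Γ(𝔪)`: `charge m v` holds iff `v` receives charge `+`,
i.e. iff `v` is at even distance (in `Γ(𝔪)`) from the largest label of its cycle.
The vertices at even distance from the largest label `M` of a cycle are exactly the
orbit of `M` under the cyclic group generated by `𝔪 ∘ 𝔢_k`. -/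
def charge {k : ℕ} (m : PairPartition k) (v : ℕ) : Prop :=
  v ∈ MulAction.orbit (Subgroup.zpowers (m.perm * (triv k).perm) : Subgroup (Equiv.Perm ℕ))
        (sSup (gammaOrbit m v))

/-- The weight `ω^(b)(𝔪, (i j)·𝔪)` attached to the transposition `(i j)` acting on `𝔪`:
it is `1` if the charges of `i` and `j` in `Γ(𝔪)` agree, and `b` otherwise. -/
noncomputable def omegab {R : Type*} [CommRing R] (b : R) {k : ℕ}
    (m : PairPartition k) (i j : ℕ) : R :=
  if (charge m i ↔ charge m j) then 1 else b

/-- The number of cycles of `Γ(𝔪)` of length `2ℓ`, i.e. the multiplicity of `ℓ`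
in the coset-type `λ(𝔪)` of `𝔪`. -/
noncomputable def cycleCount {k : ℕ} (m : PairPartition k) (ℓ : ℕ) : ℕ :=
  (((Finset.Icc 1 (2 * k)).filter fun a => (gammaOrbit m a).ncard = 2 * ℓ).card) / (2 * ℓ)

/-- Two pair partitions have the same coset-type iff `Γ(𝔪)` and `Γ(𝔪')` have the same
number of cycles of every length. -/
def SameCosetType {k : ℕ} (m m' : PairPartition k) : Prop :=
  ∀ ℓ : ℕ, cycleCount m ℓ = cycleCount m' ℓ

/-- The pair partition `𝔪` has coset-type the multiset `μ` (a partition of `k`,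
presented as the multiset of its parts). -/
def HasCosetType {k : ℕ} (m : PairPartition k) (μ : Multiset ℕ) : Prop :=
  ∀ ℓ : ℕ, 1 ≤ ℓ → μ.count ℓ = cycleCount m ℓ

/-- All lists of length `n` with entries in the finset `S`. -/
def listsLen (S : Finset (ℕ × ℕ)) : ℕ → Finset (List (ℕ × ℕ))
  | 0 => {[]}
  | n + 1 => (S ×ˢ listsLen S n).image fun p => p.1 :: p.2

/-- Apply a sequence `τ = (τ_1, …, τ_r)` of transpositions (each encoded as a pair)
to a pair partition, the rightmost transposition acting first:
`τ_1 ∘ τ_2 ∘ ⋯ ∘ τ_r · 𝔪`. -/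
def applyFacts {k : ℕ} (l : List (ℕ × ℕ)) (m : PairPartition k) : PairPartition k :=
  l.foldr (fun t acc => swapAct t.1 t.2 acc) m

/-- `l` is a monotone factorisation of the pair partition `𝔪 ∈ 𝒫_k`: a sequence of
transpositions `(a_s b_s)` with `a_s < b_s`, all `b_s` odd, `b_1 ≤ b_2 ≤ ⋯ ≤ b_r`,
and `τ_1 ∘ ⋯ ∘ τ_r · 𝔪 = 𝔢_k`. -/
def IsMonoFact {k : ℕ} (m : PairPartition k) (l : List (ℕ × ℕ)) : Prop :=
  (∀ t ∈ l, 1 ≤ t.1 ∧ t.1 < t.2 ∧ t.2 ≤ 2 * k ∧ Odd t.2) ∧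
  List.Pairwise (· ≤ ·) (l.map Prod.snd) ∧
  applyFacts l m = triv k

/-- The hive number of a monotone factorisation: the number of distinct values among
`b_1, …, b_r`. -/
def hive (l : List (ℕ × ℕ)) : ℕ := (l.map Prod.snd).toFinset.card

/-- The flip number of a monotone factorisation `τ` of `𝔪`: the number of indices `s`
with `ω^(b)(𝔪^(s), τ_s · 𝔪^(s)) = b`, where `𝔪^(s) = τ_{s+1} ∘ ⋯ ∘ τ_r · 𝔪`. -/
noncomputable def flip {k : ℕ} (m : PairPartition k) : List (ℕ × ℕ) → ℕ
  | [] => 0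
  | t :: rest =>
      (if (charge (applyFacts rest m) t.1 ↔ charge (applyFacts rest m) t.2) then 0 else 1)
        + flip m rest

/-- The finset of monotone factorisations of `𝔪 ∈ 𝒫_k` of length `r`. -/
noncomputable def monoFinset {k : ℕ} (m : PairPartition k) (r : ℕ) : Finset (List (ℕ × ℕ)) :=
  (listsLen ((Finset.Icc 1 (2 * k)) ×ˢ (Finset.Icc 1 (2 * k))) r).filter fun l => IsMonoFact m l

/-- A sequence of transpositions is connected (relative to level `k`) if together with the
involution `ι = (1 2)(3 4)⋯(2k-1 2k)` it generates a subgroup acting transitively on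
`{1, …, 2k}`. -/
def IsConnectedFact (k : ℕ) (l : List (ℕ × ℕ)) : Prop :=
  ∀ a ∈ Finset.Icc 1 (2 * k), ∀ b ∈ Finset.Icc 1 (2 * k),
    ∃ σ ∈ Subgroup.closure
        ({(triv k).perm} ∪ {p : Equiv.Perm ℕ | ∃ t ∈ l, p = Equiv.swap t.1 t.2}),
      σ a = b

end PairPartition


noncomputable instance matrixMeasurableSpace {N : ℕ} :
    MeasurableSpace (Matrix (Fin N) (Fin N) ℝ) :=
  inferInstanceAs (MeasurableSpace (Fin N → Fin N → ℝ))

/-- The compact group `O(N)` of real orthogonal `N × N` matrices. -/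
abbrev OrthGroup (N : ℕ) := Matrix.orthogonalGroup (Fin N) ℝ

noncomputable instance orthMeasurableSpace {N : ℕ} : MeasurableSpace (OrthGroup N) :=
  borel _

/-- The diagonal matrix `I_{M,N}` whose first `M` diagonal entries are `1` and whose
remaining entries are `0`. -/
def IMN (N M : ℕ) : Matrix (Fin N) (Fin N) ℝ :=
  Matrix.diagonal fun p => if (p : ℕ) < M then (1 : ℝ) else 0

/-- The map `O ↦ O · I_{M,N} · Oᵀ` from `O(N)` onto the space `A(M,N)` of idempotent
real symmetric `N × N` matrices of rank `M`. -/
def grassMap (N M : ℕ) (O : OrthGroup N) : Matrix (Fin N) (Fin N) ℝ :=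
  (O : Matrix (Fin N) (Fin N) ℝ) * IMN N M * Matrix.transpose (O : Matrix (Fin N) (Fin N) ℝ)


/-- The product `A_{i(1)i(2)} A_{i(3)i(4)} ⋯ A_{i(2k-1)i(2k)}` of matrix entries. -/
def prodEntries {N : ℕ} (k : ℕ) (i : ℕ → Fin N) (A : Matrix (Fin N) (Fin N) ℝ) : ℝ :=
  ∏ a ∈ Finset.range k, A (i (2 * a + 1)) (i (2 * a + 2))



open PairPartition


/-- A step in the (`b`- or `bt`-) Weingarten graph: a type-A edge `𝔪 → (i 2k-1)·𝔪`,
a type-B edge `𝔪 → 𝔪↓`, or a type-C edge `𝔪 → ((i 2k-1)·𝔪)↓`. -/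
inductive WStep where
  | A (i : ℕ) : WStep
  | B : WStep
  | C (i : ℕ) : WStep
deriving DecidableEq

/-- `IsPathTo k 𝔪 ρ` holds iff `ρ` is a path in the `bt`-Weingarten graph from the
pair partition `𝔪 ∈ 𝒫_k` to the empty pair partition. -/
def IsPathTo : (k : ℕ) → PairPartition k → List WStep → Prop
  | 0, _, [] => True
  | _ + 1, _, [] => False
  | 0, _, _ :: _ => False
  | k + 1, m, WStep.A i :: ρ =>
      1 ≤ i ∧ i ≤ 2 * (k + 1) - 2 ∧ IsPathTo (k + 1) (swapAct i (2 * (k + 1) - 1) m) ρ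
  | k + 1, m, WStep.B :: ρ =>
      m.f (2 * (k + 1) - 1) = 2 * (k + 1) ∧ IsPathTo k (down m) ρ
  | k + 1, m, WStep.C i :: ρ =>
      1 ≤ i ∧ i ≤ 2 * (k + 1) - 2 ∧ m.f i = 2 * (k + 1) ∧
        IsPathTo k (down (swapAct i (2 * (k + 1) - 1) m)) ρ

/-- The product of the `b`-dependent edge weights along a path. -/
noncomputable def pathWeight {R : Type*} [CommRing R] (b : R) :
    (k : ℕ) → PairPartition k → List WStep → R
  | _, _, [] => 1
  | 0, _, _ :: _ => 1
  | k + 1, m, WStep.A i :: ρ =>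
      omegab b m i (2 * (k + 1) - 1) * pathWeight b (k + 1) (swapAct i (2 * (k + 1) - 1) m) ρ
  | k + 1, m, WStep.B :: ρ => pathWeight b k (down m) ρ
  | k + 1, m, WStep.C i :: ρ => pathWeight b k (down (swapAct i (2 * (k + 1) - 1) m)) ρ

/-- The number of type-A edges of a path. -/
def countA (l : List WStep) : ℕ :=
  (l.filter fun s => match s with | WStep.A _ => true | _ => false).length

/-- The number of type-B edges of a path. -/
def countB (l : List WStep) : ℕ :=
  (l.filter fun s => match s with | WStep.B => true | _ => false).length

/-- The number of type-C edges of a path. -/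
def countC (l : List WStep) : ℕ :=
  (l.filter fun s => match s with | WStep.C _ => true | _ => false).length

/-- The `b`-Weingarten function `Wg^(b)(𝔪) ∈ ℤ[b]⟦X⟧`: the coefficient of `X^n` is the
sum of `(-1)^{ℓ_A(ρ)} w(ρ)` over all paths `ρ` (with no type-C edges, i.e. paths in the
`b`-Weingarten graph) from `𝔪` to the empty pair partition with `ℓ_A(ρ) + ℓ_B(ρ) = n`.
Here `b` is the polynomial variable of `ℤ[b]`. -/
noncomputable def WgB (k : ℕ) (m : PairPartition k) : PowerSeries (Polynomial ℤ) :=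
  PowerSeries.mk fun n =>
    ∑ᶠ (ρ : List WStep)
      (_ : IsPathTo k m ρ ∧ (∀ i, WStep.C i ∉ ρ) ∧ countA ρ + countB ρ = n),
      (-1 : Polynomial ℤ) ^ countA ρ * pathWeight (Polynomial.X : Polynomial ℤ) k m ρ

/-- The `bt`-Weingarten function `Wg^(bt)(𝔪) ∈ (ℤ[b,y])⟦X⟧`: the coefficient of `X^n` is
the sum of `(-1)^{ℓ_A(ρ)} y^{ℓ_B(ρ)} w(ρ)` over all paths `ρ` in the `bt`-Weingarten graph
from `𝔪` to the empty pair partition with `ℓ_A(ρ) + ℓ_C(ρ) = n`.  Here `b = X 0` and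
`y = X 1` in `ℤ[b,y] = MvPolynomial (Fin 2) ℤ`. -/
noncomputable def WgBT (k : ℕ) (m : PairPartition k) :
    PowerSeries (MvPolynomial (Fin 2) ℤ) :=
  PowerSeries.mk fun n =>
    ∑ᶠ (ρ : List WStep) (_ : IsPathTo k m ρ ∧ countA ρ + countC ρ = n),
      (-1 : MvPolynomial (Fin 2) ℤ) ^ countA ρ * (MvPolynomial.X 1) ^ countB ρ *
        pathWeight (MvPolynomial.X 0 : MvPolynomial (Fin 2) ℤ) k m ρ

/-- The standard basis vector `𝔪` of the free module with basis `𝒫_k`,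
realised as functions `𝒫_k → R`. -/
noncomputable def basisVec {R : Type*} [CommRing R] (k : ℕ) (m : PairPartition k) :
    PairPartition k → R :=
  fun n => if n = m then 1 else 0

/-- The `b`-deformed Jucys–Murphy operator `𝒥_i` acting on the free module with basis
`𝒫_k` (realised as functions `𝒫_k → R`): on basis vectors,
`𝒥_i(𝔪) = ∑_{a=1}^{2i-2} ω^(b)((a 2i-1)·𝔪, 𝔪) · (a 2i-1)·𝔪`. -/
noncomputable def JbOp {R : Type*} [CommRing R] (b : R) {k : ℕ} (i : ℕ)
    (v : PairPartition k → R) : PairPartition k → R :=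
  fun n => ∑ a ∈ Finset.Icc 1 (2 * i - 2),
    omegab b n a (2 * i - 1) * v (swapAct a (2 * i - 1) n)

/-- The (odd) Jucys–Murphy element `J_{2i-1} = ∑_{a=1}^{2i-2} (a
 2i-1)` of the group
algebra of `S_{2k}`, acting on the free module with basis `𝒫_k` via the linear extension
of the `S_{2k}`-action on pair partitions. -/
noncomputable def JoddOp {R : Type*} [CommRing R] {k : ℕ} (i : ℕ)
    (v : PairPartition k → R) : PairPartition k → R :=
  fun n => ∑ a ∈ Finset.Icc 1 (2 * i - 2), v (swapAct a (2 * i - 1) n)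

/-- The vector `𝔭_μ = ∑_{𝔪 : λ(𝔪) = μ} 𝔪`, i.e. the indicator function of the set of
pair partitions of coset-type `μ`. -/
noncomputable def pVec {R : Type*} [CommRing R] (k : ℕ) (μ : Multiset ℕ) :
    PairPartition k → R :=
  fun m => if HasCosetType m μ then 1 else 0

noncomputable def applyPows {R : Type*} [CommRing R] (b : R) {k : ℕ} :
    List (ℕ × ℕ) → (PairPartition k → R) → (PairPartition k → R)
  | [], v => v
  | ia :: rest, v => (JbOp b ia.1)^[ia.2] (applyPows b rest v)


/-- The coefficient ring `ℤ[b,y]⟦X⟧`, with `b = X 0` and `y = X 1`. -/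
abbrev SeriesRing := PowerSeries (MvPolynomial (Fin 2) ℤ)

noncomputable def bS : SeriesRing := PowerSeries.C (MvPolynomial.X 0)
noncomputable def yS : SeriesRing := PowerSeries.C (MvPolynomial.X 1)

/-- The operator-valued power series `(1 + X·𝒥_i)⁻¹ = ∑_{j ≥ 0} (-X)^j 𝒥_i^j`
applied to a vector `v`, computed coefficientwise. -/
noncomputable def invApply (k : ℕ) (i : ℕ) (v : PairPartition k → SeriesRing) :
    PairPartition k → SeriesRing :=
  fun n => PowerSeries.mk fun d =>
    ∑ᶠ j : ℕ, PowerSeries.coeff d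
      ((-(PowerSeries.X : SeriesRing)) ^ j * ((JbOp bS i)^[j] v) n)

/-- The vector `(y + X𝒥_j)(1 + X𝒥_j)⁻¹ ⋯ (y + X𝒥_1)(1 + X𝒥_1)⁻¹ (𝔢_k)`. -/
noncomputable def prodVec (k : ℕ) : ℕ → (PairPartition k → SeriesRing)
  | 0 => fun n => if n = triv k then 1 else 0
  | j + 1 => fun n =>
      yS * invApply k (j + 1) (prodVec k j) n +
        PowerSeries.X * (JbOp bS (j + 1) (invApply k (j + 1) (prodVec k j))) n


open MvPolynomial

/-- The formal partial derivative `∂_n = ∂/∂p_n` on the polynomial ring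
`K[p_1, p_2, …]` (the variables being indexed by positive naturals);
junk value `0` for `n = 0`. -/
noncomputable def pd (K : Type*) [CommRing K] (n : ℕ) :
    MvPolynomial ℕ+ K →ₗ[K] MvPolynomial ℕ+ K :=
  if h : 0 < n then (pderiv (⟨n, h⟩ : ℕ+)).toLinearMap else 0

/-- The variable `p_n` of `K[p_1, p_2, …]`; junk value `0` for `n = 0`. -/
noncomputable def pvar (K : Type*) [CommRing K] (n : ℕ) : MvPolynomial ℕ+ K :=
  if h : 0 < n then X ⟨n, h⟩ else 0

section SumOp

variable (K : Type*) [CommRing K]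

lemma sumOp_support_subset (m : ℕ) (f : MvPolynomial ℕ+ K) :
    (Function.support fun i => ((i + m : ℕ) : K) • (pvar K i * pd K (i + m) f)) ⊆
      ((fun i => i + m) ⁻¹' ↑(f.vars.image (fun v : ℕ+ => (v : ℕ)))) := by
  intro i hi
  simp only [Function.mem_support] at hi
  by_contra hmem
  apply hi
  rcases Nat.eq_zero_or_pos (i + m) with h0 | h0
  · have hi0 : i = 0 := by omega
    subst hi0
    simp [pvar]
  · have hnot : (⟨i + m, h0⟩ : ℕ+) ∉ f.vars := by
      intro hv
      apply hmem
      simp only [Set.mem_preimage, Finset.coe_image, Set.mem_image, Finset.mem_coe]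
      exact ⟨⟨i + m, h0⟩, hv, rfl⟩
    have hz : pd K (i + m) f = 0 := by
      have e : pd K (i + m) = (pderiv (⟨i + m, h0⟩ : ℕ+)).toLinearMap := by
        unfold pd
        exact dif_pos h0
      rw [e]
      have := pderiv_eq_zero_of_notMem_vars (R := K) hnot
      first
        | exact this
        | simpa using this
    rw [hz, mul_zero, smul_zero]

lemma sumOp_support_finite (m : ℕ) (f : MvPolynomial ℕ+ K) :
    (Function.support fun i => ((i + m : ℕ) : K) • (pvar K i * pd K (i + m) f)).Finite := by
  apply Set.Finite.subset _ (sumOp_support_subset K m f)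
  apply Set.Finite.preimage
  · exact (add_left_injective m).injOn
  · exact (f.vars.image (fun v : ℕ+ => (v : ℕ))).finite_toSet

/-- The operator `∑_{i ≥ 1} (i+m) p_i ∂_{i+m}` on `K[p_1, p_2, …]`
(a well-defined linear operator, the sum being locally finite on polynomials). -/
noncomputable def sumOp (m : ℕ) : MvPolynomial ℕ+ K →ₗ[K] MvPolynomial ℕ+ K where
  toFun f := ∑ᶠ i : ℕ, ((i + m : ℕ) : K) • (pvar K i * pd K (i + m) f)
  map_add' x y := by
    have key : ∀ i : ℕ, ((i + m : ℕ) : K) • (pvar K i * pd K (i + m) (x + y)) =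
        ((i + m : ℕ) : K) • (pvar K i * pd K (i + m) x) +
          ((i + m : ℕ) : K) • (pvar K i * pd K (i + m) y) := by
      intro i
      rw [map_add, mul_add, smul_add]
    try dsimp only
    rw [finsum_congr key]
    exact finsum_add_distrib (sumOp_support_finite K m x) (sumOp_support_finite K m y)
  map_smul' c x := by
    have key : ∀ i : ℕ, ((i + m : ℕ) : K) • (pvar K i * pd K (i + m) (c • x)) =
        c • (((i + m : ℕ) : K) • (pvar K i * pd K (i + m) x)) := by
      intro i
      rw [_root_.map_smul, smul_comm]
      congr 1
      rw [mul_smul_comm]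
    try dsimp only
    rw [finsum_congr key]
    simp only [RingHom.id_apply]
    exact (smul_finsum' c (sumOp_support_finite K m x)).symm
end SumOp

/-- The `bt`-deformed Virasoro-type operator `L_m` of Theorem 3.5/4.7, acting on the
polynomial ring `K[p_1, p_2, …]`. -/
noncomputable def Lop (K : Type*) [CommRing K] (b t z hbar : K) (m : ℕ) :
    MvPolynomial ℕ+ K →ₗ[K] MvPolynomial ℕ+ K :=
  (((m : K) * Ring.inverse hbar) • pd K m)
    - (1 + b) • (∑ i ∈ Finset.Ioo 0 m,
        (((i : ℕ) : K) * (((m - i : ℕ)) : K)) • (pd K i ∘ₗ pd K (m - i)))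
    - sumOp K m
    - ((b * (m : K) * ((m - 1 : ℕ) : K)) • pd K m)
    - ((z * Ring.inverse hbar * (t - 1) * ((m - 1 : ℕ) : K)) • pd K (m - 1))
    - (if m = 1 then (z * Ring.inverse hbar * Ring.inverse hbar * Ring.inverse (1 + b)) •
        (LinearMap.id : MvPolynomial ℕ+ K →ₗ[K] MvPolynomial ℕ+ K) else 0)
open PairPartition

/-- `i : {1,…,2k} → {1,…,N}` is admissible for `𝔪`: `{a,b} ∈ 𝔪` implies `i a = i b`. -/
def Admissible {N : ℕ} (k : ℕ) (m : PairPartition k) (i : ℕ → Fin N) : Prop :=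
  ∀ a, 1 ≤ a → a ≤ 2 * k → i (m.f a) = i a

/-- `i : {1,…,2k} → {1,…,N}` is strongly admissible for `𝔪`:
for `a, b ∈ {1,…,2k}`, `i a = i b` holds iff `a = b` or `{a,b} ∈ 𝔪`. -/
def StronglyAdmissible {N : ℕ} (k : ℕ) (m : PairPartition k) (i : ℕ → Fin N) : Prop :=
  ∀ a b, 1 ≤ a → a ≤ 2 * k → 1 ≤ b → b ≤ 2 * k → (i a = i b ↔ (a = b ∨ m.f a = b))

/-- `ĥ^{(t)}_r(𝔪)` evaluated at a real number `t`: the weighted count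
`∑_{τ ∈ Mono(𝔪), ℓ(τ) = r} t^{hive(τ)}`. -/
noncomputable def hiveSum {k : ℕ} (m : PairPartition k) (r : ℕ) (t : ℝ) : ℝ :=
  ∑ l ∈ monoFinset m r, t ^ hive l

/-- The `bt`-monotone count `∑_{τ ∈ Mono(𝔪), ℓ(τ) = r} b^{flip(τ)} t^{hive(τ)}`
in `ℤ[b,t]`, with `b = X 0` and `t = X 1`. -/
noncomputable def btSum {k : ℕ} (m : PairPartition k) (r : ℕ) : MvPolynomial (Fin 2) ℤ :=
  ∑ l ∈ monoFinset m r,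
    (MvPolynomial.X 0 : MvPolynomial (Fin 2) ℤ) ^ (flip m l) *
      (MvPolynomial.X 1) ^ (hive l)

/-- The connected `bt`-monotone count
`∑_{τ ∈ CMono(𝔪), ℓ(τ) = r} b^{flip(τ)} t^{hive(τ)}` in `ℚ[b,t]`,
with `b = X 0` and `t = X 1`. -/
noncomputable def cMonoSum {k : ℕ} (m : PairPartition k) (r : ℕ) : MvPolynomial (Fin 2) ℚ :=
  ∑ l ∈ (monoFinset m r).filter (fun l => IsConnectedFact k l),
    (MvPolynomial.X 0 : MvPolynomial (Fin 2) ℚ) ^ (flip m l) *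
      (MvPolynomial.X 1) ^ (hive l)

/-- The operator `c + J_{2i-1}` on the free module with basis `𝒫_k`. -/
noncomputable def affJoddOp {k : ℕ} (c : ℝ) (i : ℕ) (v : PairPartition k → ℝ) :
    PairPartition k → ℝ :=
  fun n => c * v n + JoddOp i v n

namespace PairPartition

variable {k : ℕ}

lemma f_inj' (m : PairPartition k) : Function.Injective m.f :=
  Function.Involutive.injective m.invol

lemma f_ne' (m : PairPartition k) {x : ℕ} (h1 : 1 ≤ x) (h2 : x ≤ 2 * k) : m.f x ≠ x :=
  (m.moves x).mpr ⟨h1, h2⟩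

lemma f_mem' (m : PairPartition k) {x : ℕ} (h1 : 1 ≤ x) (h2 : x ≤ 2 * k) :
    1 ≤ m.f x ∧ m.f x ≤ 2 * k := by
  by_contra h
  have h' : m.f (m.f x) = m.f x := not_not.mp (fun hc => h ((m.moves _).mp hc))
  rw [m.invol] at h'
  exact f_ne' m h1 h2 h'.symm

lemma perm_mem_iff' (m : PairPartition k) (x : ℕ) :
    (1 ≤ m.perm x ∧ m.perm x ≤ 2 * k) ↔ (1 ≤ x ∧ x ≤ 2 * k) := by
  show (1 ≤ m.f x ∧ m.f x ≤ 2 * k) ↔ _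
  constructor
  · intro h
    by_contra hx
    have hfx : m.f x = x := not_not.mp (fun hc => hx ((m.moves x).mp hc))
    rw [hfx] at h
    exact hx h
  · intro h
    exact f_mem' m h.1 h.2

lemma mem_gen_left (m : PairPartition k) :
    (triv k).perm ∈ ({(triv k).perm, m.perm} : Set (Equiv.Perm ℕ)) := Set.mem_insert _ _

lemma mem_gen_right (m : PairPartition k) :
    m.perm ∈ ({(triv k).perm, m.perm} : Set (Equiv.Perm ℕ)) :=
  Set.mem_insert_iff.mpr (Or.inr rfl)

lemma closure_mem_iff' (m : PairPartition k) {g : Equiv.Perm ℕ}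
    (hg : g ∈ Subgroup.closure {(triv k).perm, m.perm}) :
    ∀ x, (1 ≤ g x ∧ g x ≤ 2 * k) ↔ (1 ≤ x ∧ x ≤ 2 * k) := by
  refine Subgroup.closure_induction ?_ ?_ ?_ ?_ hg
  · intro g hgmem x
    rcases Set.mem_insert_iff.mp hgmem with rfl | hg'
    · exact perm_mem_iff' (triv k) x
    · rw [Set.mem_singleton_iff] at hg'
      subst hg'
      exact perm_mem_iff' m x
  · intro x; simp
  · intro a b _ _ ha hb x
    have hab : (a * b) x = a (b x) := rfl
    rw [hab]
    exact (ha (b x)).trans (hb x)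
  · intro a _ ha x
    have h1 := (ha (a⁻¹ x)).symm
    rwa [Equiv.Perm.coe_inv, Equiv.apply_symm_apply] at h1

lemma perm_mul_self' (m : PairPartition k) : m.perm * m.perm = 1 := by
  ext x
  show m.f (m.f x) = x
  exact m.invol x

lemma perm_inv' (m : PairPartition k) : m.perm⁻¹ = m.perm := by
  rw [inv_eq_iff_mul_eq_one]
  exact perm_mul_self' m

lemma conj_c' (m : PairPartition k) :
    m.perm * (m.perm * (triv k).perm) * m.perm⁻¹ = (m.perm * (triv k).perm)⁻¹ := by
  rw [perm_inv', mul_inv_rev, perm_inv' m, perm_inv' (triv k)]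
  rw [← mul_assoc, perm_mul_self' m, one_mul]

lemma perm_mul_zpow' (m : PairPartition k) (n : ℤ) :
    m.perm * (m.perm * (triv k).perm) ^ n = (m.perm * (triv k).perm) ^ (-n) * m.perm := by
  have h1 : (MulAut.conj m.perm) ((m.perm * (triv k).perm) ^ n)
      = (m.perm * (triv k).perm) ^ (-n) := by
    rw [map_zpow, MulAut.conj_apply, conj_c', inv_zpow, ← zpow_neg]
  rw [MulAut.conj_apply, perm_inv'] at h1
  calc m.perm * (m.perm * (triv k).perm) ^ n
      = (m.perm * (m.perm * (triv k).perm) ^ n * m.perm) * m.perm := by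
        rw [mul_assoc, perm_mul_self' m, mul_one]
    _ = (m.perm * (triv k).perm) ^ (-n) * m.perm := by rw [h1]

lemma closure_elems' (m : PairPartition k) {g : Equiv.Perm ℕ}
    (hg : g ∈ Subgroup.closure {(triv k).perm, m.perm}) :
    ∃ n : ℤ, g = (m.perm * (triv k).perm) ^ n ∨
      g = (m.perm * (triv k).perm) ^ n * m.perm := by
  refine Subgroup.closure_induction ?_ ?_ ?_ ?_ hg
  · intro g hgmem
    rcases Set.mem_insert_iff.mp hgmem with rfl | hg'
    · refine ⟨-1, Or.inr ?_⟩
      rw [zpow_neg_one, mul_inv_rev, perm_inv' m, perm_inv' (triv k), mul_assoc,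
        perm_mul_self' m, mul_one]
    · rw [Set.mem_singleton_iff] at hg'
      subst hg'
      exact ⟨0, Or.inr (by rw [zpow_zero, one_mul])⟩
  · exact ⟨0, Or.inl (zpow_zero _).symm⟩
  · rintro a b _ _ ⟨na, ha⟩ ⟨nb, hb⟩
    rcases ha with rfl | rfl <;> rcases hb with rfl | rfl
    · exact ⟨na + nb, Or.inl (zpow_add _ na nb).symm⟩
    · exact ⟨na + nb, Or.inr (by rw [← mul_assoc, ← zpow_add])⟩
    · refine ⟨na - nb, Or.inr ?_⟩
      rw [mul_assoc, perm_mul_zpow', ← mul_assoc, ← zpow_add, sub_eq_add_neg]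
    · refine ⟨na - nb, Or.inl ?_⟩
      have e : m.perm * ((m.perm * (triv k).perm) ^ nb * m.perm)
          = (m.perm * (triv k).perm) ^ (-nb) := by
        rw [← mul_assoc, perm_mul_zpow', mul_assoc, perm_mul_self', mul_one]
      rw [mul_assoc, e, ← zpow_add, sub_eq_add_neg]
  · rintro a _ ⟨na, (rfl | rfl)⟩
    · exact ⟨-na, Or.inl (zpow_neg _ na).symm⟩
    · refine ⟨na, Or.inr ?_⟩
      rw [mul_inv_rev, perm_inv', ← zpow_neg, perm_mul_zpow', neg_neg]

lemma no_reflection' (m : PairPartition k) {v : ℕ} (hv : 1 ≤ v ∧ v ≤ 2 * k) (n : ℤ) :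
    m.perm v ≠ ((m.perm * (triv k).perm) ^ n) v := by
  intro h
  set c := m.perm * (triv k).perm with hc
  have hcmem : c ∈ Subgroup.closure {(triv k).perm, m.perm} :=
    mul_mem (Subgroup.subset_closure (mem_gen_right m))
      (Subgroup.subset_closure (mem_gen_left m))
  have hS : ∀ j : ℤ, 1 ≤ (c ^ j) v ∧ (c ^ j) v ≤ 2 * k := fun j =>
    (closure_mem_iff' m (Subgroup.zpow_mem _ hcmem j) v).mpr hv
  have key : ∀ j : ℤ, m.perm ((c ^ j) v) = (c ^ (n - j)) v := by
    intro j
    have h1 : m.perm ((c ^ j) v) = (c ^ (-j)) (m.perm v) := by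
      calc m.perm ((c ^ j) v) = (m.perm * c ^ j) v := rfl
        _ = (c ^ (-j) * m.perm) v := by rw [perm_mul_zpow']
        _ = (c ^ (-j)) (m.perm v) := rfl
    have h2 : (-j) + n = n - j := by ring
    rw [h1, h, ← Equiv.Perm.mul_apply, ← zpow_add, h2]
  rcases Int.even_or_odd n with ⟨j, hj⟩ | ⟨j, hj⟩
  · have hfix := key j
    have hnj : n - j = j := by omega
    rw [hnj] at hfix
    exact f_ne' m (hS j).1 (hS j).2 hfix
  · have ht : (triv k).perm = m.perm * c := by
      rw [hc, ← mul_assoc, perm_mul_self', one_mul]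
    have hfix : (triv k).perm ((c ^ j) v) = (c ^ j) v := by
      have hcc : c * c ^ j = c ^ (j + 1) := by
        rw [add_comm]
        exact (zpow_one_add c j).symm
      have h2 : (triv k).perm ((c ^ j) v) = m.perm ((c ^ (j + 1)) v) := by
        rw [ht]
        calc (m.perm * c) ((c ^ j) v) = (m.perm * c * c ^ j) v := rfl
          _ = (m.perm * c ^ (j + 1)) v := by rw [mul_assoc, hcc]
          _ = m.perm ((c ^ (j + 1)) v) := rfl
      have h3 : n - (j + 1) = j := by omega
      rw [h2, key (j + 1), h3]
    exact f_ne' (triv k) (hS j).1 (hS j).2 hfix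

lemma charge_iff' (m : PairPartition k) (v : ℕ) :
    charge m v ↔
      ∃ n : ℤ, ((m.perm * (triv k).perm) ^ n) (sSup (gammaOrbit m v)) = v := by
  unfold charge
  rw [MulAction.mem_orbit_iff]
  constructor
  · rintro ⟨⟨g, hg⟩, hgv⟩
    rcases Subgroup.mem_zpowers_iff.mp hg with ⟨n, rfl⟩
    exact ⟨n, hgv⟩
  · rintro ⟨n, hn⟩
    exact ⟨⟨_, Subgroup.zpow_mem _ (Subgroup.mem_zpowers _) n⟩, hn⟩

lemma orbit_subset' (m : PairPartition k) {v : ℕ} (hv : 1 ≤ v ∧ v ≤ 2 * k) :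
    ∀ x ∈ gammaOrbit m v, 1 ≤ x ∧ x ≤ 2 * k := by
  rintro x ⟨⟨g, hg⟩, rfl⟩
  exact (closure_mem_iff' m hg v).mpr hv

lemma sSup_orbit_mem' (m : PairPartition k) {v : ℕ} (hv : 1 ≤ v ∧ v ≤ 2 * k) :
    sSup (gammaOrbit m v) ∈ gammaOrbit m v :=
  Nat.sSup_mem ⟨v, MulAction.mem_orbit_self v⟩
    ⟨2 * k, fun x hx => (orbit_subset' m hv x hx).2⟩

lemma gammaOrbit_f' (m : PairPartition k) (v : ℕ) :
    gammaOrbit m (m.f v) = gammaOrbit m v := by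
  apply MulAction.orbit_eq_iff.mpr
  exact ⟨⟨m.perm, Subgroup.subset_closure (mem_gen_right m)⟩, rfl⟩

lemma charge_f' (m : PairPartition k) {v : ℕ} (hv : 1 ≤ v ∧ v ≤ 2 * k) :
    charge m (m.f v) ↔ ¬ charge m v := by
  set c := m.perm * (triv k).perm with hc
  have hMob := sSup_orbit_mem' m hv
  have hMS := orbit_subset' m hv _ hMob
  rw [charge_iff', charge_iff', gammaOrbit_f']
  set M := sSup (gammaOrbit m v) with hM
  constructor
  · rintro ⟨b, hb⟩ ⟨a, ha⟩
    have e1 : m.perm ((c ^ a) M) = (c ^ (-a)) (m.perm M) := by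
      calc m.perm ((c ^ a) M) = (m.perm * c ^ a) M := rfl
        _ = (c ^ (-a) * m.perm) M := by rw [perm_mul_zpow']
        _ = (c ^ (-a)) (m.perm M) := rfl
    have h2 : (c ^ (-a)) (m.perm M) = (c ^ b) M := by
      rw [← e1, ha]
      exact hb.symm
    have hz : a + -a = (0 : ℤ) := by ring
    have h3 : m.perm M = (c ^ (a + b)) M := by
      calc m.perm M = (c ^ a) ((c ^ (-a)) (m.perm M)) := by
            rw [← Equiv.Perm.mul_apply, ← zpow_add, hz, zpow_zero, Equiv.Perm.one_apply]
        _ = (c ^ a) ((c ^ b) M) := by rw [h2]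
        _ = (c ^ (a + b)) M := by rw [← Equiv.Perm.mul_apply, ← zpow_add]
    exact no_reflection' m hMS (a + b) h3
  · intro hnc
    have horb : MulAction.orbit
        ((Subgroup.closure {(triv k).perm, m.perm}) : Subgroup (Equiv.Perm ℕ)) M
        = gammaOrbit m v := MulAction.orbit_eq_iff.mpr hMob
    have hvmem : v ∈ MulAction.orbit
        ((Subgroup.closure {(triv k).perm, m.perm}) : Subgroup (Equiv.Perm ℕ)) M := by
      rw [horb]
      exact MulAction.mem_orbit_self v
    rcases hvmem with ⟨⟨g, hgmem⟩, hgv⟩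
    have happ : g M = v := hgv
    rcases closure_elems' m hgmem with ⟨n, hgn | hgn⟩
    · rw [hgn] at happ
      exact absurd ⟨n, happ⟩ hnc
    · rw [hgn] at happ
      refine ⟨-n, ?_⟩
      have hfv : m.f v = (c ^ (-n)) M := by
        rw [← happ]
        calc m.f ((c ^ n * m.perm) M)
            = (m.perm * (c ^ n * m.perm)) M := rfl
          _ = ((m.perm * c ^ n) * m.perm) M := by rw [← mul_assoc]
          _ = ((c ^ (-n) * m.perm) * m.perm) M := by rw [perm_mul_zpow']
          _ = (c ^ (-n) * (m.perm * m.perm)) M := by rw [mul_assoc]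
          _ = (c ^ (-n)) M := by rw [perm_mul_self', mul_one]
      exact hfv.symm

lemma charge_ne' (m : PairPartition k) {v w : ℕ} (hv : 1 ≤ v ∧ v ≤ 2 * k)
    (hw : m.f v = w) : charge m w ↔ ¬ charge m v := by
  rw [← hw]
  exact charge_f' m hv

lemma swap_fixes (m : PairPartition k) {i j : ℕ} (hfij : m.f i = j) :
    ∀ a, Equiv.swap i j (m.f (Equiv.swap i j a)) = m.f a := by
  intro a
  have hfj : m.f j = i := by rw [← hfij, m.invol]
  rcases eq_or_ne a i with rfl | hai
  · rw [Equiv.swap_apply_left, hfj, hfij, Equiv.swap_apply_left]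
  rcases eq_or_ne a j with rfl | haj
  · rw [Equiv.swap_apply_right, hfij, hfj, Equiv.swap_apply_right]
  · rw [Equiv.swap_apply_of_ne_of_ne hai haj]
    have h1 : m.f a ≠ i := fun h => haj (by rw [← m.invol a, h, hfij])
    have h2 : m.f a ≠ j := fun h => hai (by rw [← m.invol a, h, hfj])
    exact Equiv.swap_apply_of_ne_of_ne h1 h2

lemma fixed_swap (m : PairPartition k) {i j : ℕ} (hij : i ≠ j)
    (hi : 1 ≤ i) (hi2 : i ≤ 2 * k)
    (H : ∀ a, Equiv.swap i j (m.f (Equiv.swap i j a)) = m.f a) :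
    m.f i = j := by
  by_contra hfi
  have h2 := H j
  rw [Equiv.swap_apply_right] at h2
  have hfi_i : m.f i ≠ i := f_ne' m hi hi2
  rw [Equiv.swap_apply_of_ne_of_ne hfi_i hfi] at h2
  exact hij (f_inj' m h2)

lemma one_shared_false (m : PairPartition k) {i j j' : ℕ}
    (hij : i ≠ j) (hij' : i ≠ j') (hjj' : j ≠ j')
    (hi : 1 ≤ i) (hi2 : i ≤ 2 * k)
    (H : ∀ a, Equiv.swap i j (m.f (Equiv.swap i j a))
      = Equiv.swap i j' (m.f (Equiv.swap i j' a))) :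
    False := by
  rcases eq_or_ne (m.f i) j with hfij | hfij
  · have H1 := swap_fixes m hfij
    have H2 : ∀ a, Equiv.swap i j' (m.f (Equiv.swap i j' a)) = m.f a :=
      fun a => by rw [← H a, H1 a]
    exact hjj' (hfij.symm.trans (fixed_swap m hij' hi hi2 H2))
  rcases eq_or_ne (m.f i) j' with hfij' | hfij'
  · have H1 := swap_fixes m hfij'
    have H2 : ∀ a, Equiv.swap i j (m.f (Equiv.swap i j a)) = m.f a :=
      fun a => by rw [H a, H1 a]
    exact hjj' ((fixed_swap m hij hi hi2 H2).symm.trans hfij')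
  · have h2 := H j
    rw [Equiv.swap_apply_right] at h2
    rw [Equiv.swap_apply_of_ne_of_ne hij.symm hjj'] at h2
    have hfii : m.f i ≠ i := f_ne' m hi hi2
    rw [Equiv.swap_apply_of_ne_of_ne hfii hfij] at h2
    have h3 : Equiv.swap i j' (m.f i) = m.f j := by rw [h2, Equiv.swap_apply_self]
    rw [Equiv.swap_apply_of_ne_of_ne hfii hfij'] at h3
    exact hij (f_inj' m h3)

lemma disjoint_case (m : PairPartition k) {i j i' j' : ℕ}
    (hij : i ≠ j) (hij' : i' ≠ j')
    (h1 : i ≠ i') (h2 : i ≠ j') (h3 : j ≠ i') (h4 : j ≠ j')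
    (hi : 1 ≤ i) (hi2 : i ≤ 2 * k) (hi' : 1 ≤ i') (hi2' : i' ≤ 2 * k)
    (H : ∀ a, Equiv.swap i j (m.f (Equiv.swap i j a))
      = Equiv.swap i' j' (m.f (Equiv.swap i' j' a))) :
    (m.f i = j ∧ m.f i' = j') ∨ (m.f i = i' ∧ m.f j = j') ∨ (m.f i = j' ∧ m.f j = i') := by
  rcases eq_or_ne (m.f i) j with hfij | hfij
  · left
    refine ⟨hfij, ?_⟩
    have H1 := swap_fixes m hfij
    have H2 : ∀ a, Equiv.swap i' j' (m.f (Equiv.swap i' j' a)) = m.f a :=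
      fun a => by rw [← H a, H1 a]
    exact fixed_swap m hij' hi' hi2' H2
  · have hEj := H j
    rw [Equiv.swap_apply_right] at hEj
    rw [Equiv.swap_apply_of_ne_of_ne h3 h4] at hEj
    have hfii : m.f i ≠ i := f_ne' m hi hi2
    rw [Equiv.swap_apply_of_ne_of_ne hfii hfij] at hEj
    have h5 : Equiv.swap i' j' (m.f i) = m.f j := by rw [hEj, Equiv.swap_apply_self]
    rcases eq_or_ne (m.f i) i' with hfi | hfi
    · right; left
      refine ⟨hfi, ?_⟩
      rw [hfi, Equiv.swap_apply_left] at h5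
      exact h5.symm
    rcases eq_or_ne (m.f i) j' with hfi2 | hfi2
    · right; right
      refine ⟨hfi2, ?_⟩
      rw [hfi2, Equiv.swap_apply_right] at h5
      exact h5.symm
    · exfalso
      rw [Equiv.swap_apply_of_ne_of_ne hfi hfi2] at h5
      exact hij (f_inj' m h5)

end PairPartition

/-- **Well-definedness of the weight function `ω^(b)`** (Definition 4.1 and the
discussion following it).  Let `k ≥ 1` and `𝔪, 𝔫 ∈ 𝒫_k`.  If `(i j)·𝔪 = 𝔫` and
`(i' j')·𝔪 = 𝔫` for transpositions `(i j), (i' j') ∈ S_{2k}`, and `q` is the charge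
function of `Γ(𝔪)`, then `q(i) = q(j) ↔ q(i') = q(j')`.  Consequently the value
`ω^(b)(𝔪,𝔫) ∈ {1, b}` does not depend on the choice of transposition sending `𝔪`
to `𝔫` (here stated over `ℤ[b]`, with `b` the polynomial variable). -/
theorem omegab_well_defined
    (k : ℕ) (hk : 1 ≤ k) (m n : PairPartition k)
    (i j i' j' : ℕ) (hij : i ≠ j) (hij' : i' ≠ j')
    (hi : 1 ≤ i) (hi2 : i ≤ 2 * k) (hj : 1 ≤ j) (hj2 : j ≤ 2 * k)
    (hi' : 1 ≤ i') (hi2' : i' ≤ 2 * k) (hj' : 1 ≤ j') (hj2' : j' ≤ 2 * k)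
    (h1 : swapAct i j m = n) (h2 : swapAct i' j' m = n) :
    ((charge m i ↔ charge m j) ↔ (charge m i' ↔ charge m j')) ∧
      omegab (Polynomial.X : Polynomial ℤ) m i j =
        omegab (Polynomial.X : Polynomial ℤ) m i' j' := by
  have hn := h1.trans h2.symm
  have hfeq : (swapAct i j m).f = (swapAct i' j' m).f := congrArg PairPartition.f hn
  unfold swapAct at hfeq
  rw [dif_pos ⟨hi, hi2, hj, hj2⟩, dif_pos ⟨hi', hi2', hj', hj2'⟩] at hfeq
  have H : ∀ a, Equiv.swap i j (m.f (Equiv.swap i j a))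
      = Equiv.swap i' j' (m.f (Equiv.swap i' j' a)) := fun a => congrFun hfeq a
  suffices key : ((charge m i ↔ charge m j) ↔ (charge m i' ↔ charge m j')) by
    refine ⟨key, ?_⟩
    simp only [omegab]
    exact if_congr key rfl rfl
  by_cases hii' : i = i'
  · by_cases hjj' : j = j'
    · subst hii'; subst hjj'; exact Iff.rfl
    · exfalso
      subst hii'
      exact one_shared_false m hij hij' hjj' hi hi2 H
  by_cases hijp : i = j'
  · by_cases hji' : j = i'
    · subst hijp; subst hji'
      exact Iff.comm
    · exfalso
      subst hijp
      rw [Equiv.swap_comm i' i] at H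
      exact one_shared_false m hij hii' hji' hi hi2 H
  by_cases hji' : j = i'
  · exfalso
    subst hji'
    rw [Equiv.swap_comm i j] at H
    exact one_shared_false m (Ne.symm hij) hij' hijp hj hj2 H
  by_cases hjj' : j = j'
  · exfalso
    subst hjj'
    rw [Equiv.swap_comm i j, Equiv.swap_comm i' j] at H
    exact one_shared_false m (Ne.symm hij) hji' hii' hj hj2 H
  rcases disjoint_case m hij hij' hii' hijp hji' hjj' hi hi2 hi' hi2' H with
    ⟨ha, hb⟩ | ⟨ha, hb⟩ | ⟨ha, hb⟩
  · have e1 := charge_ne' m ⟨hi, hi2⟩ ha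
    have e2 := charge_ne' m ⟨hi', hi2'⟩ hb
    tauto
  · have e1 := charge_ne' m ⟨hi, hi2⟩ ha
    have e2 := charge_ne' m ⟨hj, hj2⟩ hb
    tauto
  · have e1 := charge_ne' m ⟨hi, hi2⟩ ha
    have e2 := charge_ne' m ⟨hj, hj2⟩ hb
    tauto
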